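/- arXiv:1607.02011 — 2 statements merged into one kernel-verified Lean document; each statement's English description precedes it below -/
import Mathlib

section
/- Let B₁, B₂ be Banach spaces and A : B₁ → B₂ a linear operator (not necessarily bounded). Then there exists a constant N > 0 and a subset F ⊆ B₁ that is dense in B₁ such that ‖A f‖ ≤ N ‖f‖ for all f ∈ F. -/
theorem stmt0 {B₁ B₂ : Type*} [NormedAddCommGroup B₁] [NormedSpace ℝ B₁] [CompleteSpace B₁]
    [NormedAddCommGroup B₂] [NormedSpace ℝ B₂] [CompleteSpace B₂]
    (A : B₁ →ₗ[ℝ] B₂) :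
    ∃ (N : ℝ) (F : Set B₁), 0 < N ∧ Dense F ∧ ∀ f ∈ F, ‖A f‖ ≤ N * ‖f‖ := by
  set M : ℕ → Set B₁ := fun n => {f | ‖A f‖ ≤ n * ‖f‖} with hM
  have hcover : (⋃ n, closure (M n)) = Set.univ := by
    apply Set.eq_univ_of_forall
    intro f
    by_cases hf : f = 0
    · refine Set.mem_iUnion.2 ⟨0, subset_closure ?_⟩
      simp [hM, hf]
    · have hfpos : (0:ℝ) < ‖f‖ := norm_pos_iff.2 hf
      refine Set.mem_iUnion.2 ⟨⌈‖A f‖ / ‖f‖⌉₊, subset_closure ?_⟩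
      have h1 : ‖A f‖ / ‖f‖ ≤ (⌈‖A f‖ / ‖f‖⌉₊ : ℝ) := Nat.le_ceil _
      simpa [hM, Set.mem_setOf_eq] using (div_le_iff₀ hfpos).mp h1
  obtain ⟨n, x₀, hx₀⟩ := nonempty_interior_of_iUnion_of_closed
    (fun n => isClosed_closure) hcover
  obtain ⟨r, hr, hball⟩ := Metric.isOpen_iff.1 isOpen_interior x₀ hx₀
  have hball : Metric.ball x₀ r ⊆ closure (M n) := hball.trans interior_subset
  set N : ℝ := 4 * (n + 1) * (2 * ‖x₀‖ + r) / r with hN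
  have hx₀nn : (0:ℝ) ≤ ‖x₀‖ := norm_nonneg _
  have hNpos : 0 < N := by
    apply div_pos _ hr
    have h1 : (0:ℝ) < 4 * ((n:ℝ) + 1) := by positivity
    nlinarith
  refine ⟨N, {w | ‖A w‖ ≤ N * ‖w‖}, hNpos, ?_, fun f hf => hf⟩
  rw [Metric.dense_iff]
  intro f ε hε
  by_cases hf : f = 0
  · exact ⟨0, by simpa [hf] using hε, by simp⟩
  have hfpos : (0:ℝ) < ‖f‖ := norm_pos_iff.2 hf
  set t : ℝ := r / (2 * ‖f‖) with ht
  have htpos : 0 < t := by positivity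
  have htf : t * ‖f‖ = r / 2 := by
    rw [ht, div_mul_eq_mul_div, div_eq_div_iff (by positivity) (by positivity)]; ring
  set δ : ℝ := min (ε * t / 2) (t * ‖f‖ / 4) with hδ
  have hδpos : 0 < δ := by apply lt_min <;> positivity
  have hδ1 : δ ≤ ε * t / 2 := min_le_left _ _
  have hδ2 : δ ≤ t * ‖f‖ / 4 := min_le_right _ _
  have hmem1 : x₀ + t • f ∈ closure (M n) := by
    apply hball
    rw [Metric.mem_ball, dist_eq_norm]
    have h : ‖x₀ + t • f - x₀‖ = t * ‖f‖ := by
      rw [add_sub_cancel_left, norm_smul, Real.norm_eq_abs, abs_of_pos htpos]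
    rw [h, htf]; linarith
  have hmem2 : x₀ ∈ closure (M n) := hball (by simpa using hr)
  obtain ⟨u, hu, hud⟩ := Metric.mem_closure_iff.1 hmem1 δ hδpos
  obtain ⟨v, hv, hvd⟩ := Metric.mem_closure_iff.1 hmem2 δ hδpos
  have h1 : ‖u - (x₀ + t • f)‖ < δ := by rw [← dist_eq_norm, dist_comm]; exact hud
  have h2 : ‖v - x₀‖ < δ := by rw [← dist_eq_norm, dist_comm]; exact hvd
  set w : B₁ := t⁻¹ • (u - v) with hw
  have hwf : ‖w - f‖ < 2 * δ / t := by
    have heq : w - f = t⁻¹ • (u - v - t • f) := by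
      rw [hw, smul_sub, smul_sub, smul_sub, smul_smul, inv_mul_cancel₀ (ne_of_gt htpos), one_smul]
    rw [heq, norm_smul, Real.norm_eq_abs, abs_of_pos (by positivity : (0:ℝ) < t⁻¹)]
    have hdecomp : u - v - t • f = (u - (x₀ + t • f)) - (v - x₀) := by abel
    have hnorm : ‖u - v - t • f‖ < 2 * δ := by
      rw [hdecomp]
      calc ‖(u - (x₀ + t • f)) - (v - x₀)‖ ≤ ‖u - (x₀ + t • f)‖ + ‖v - x₀‖ := norm_sub_le _ _
        _ < 2 * δ := by linarith
    rw [div_eq_inv_mul]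
    exact mul_lt_mul_of_pos_left hnorm (by positivity)
  have hwfε : ‖w - f‖ < ε := by
    have : 2 * δ / t ≤ ε := by
      rw [div_le_iff₀ htpos]; linarith
    linarith
  have hwlow : ‖f‖ / 2 ≤ ‖w‖ := by
    have hd : 2 * δ / t ≤ ‖f‖ / 2 := by
      rw [div_le_div_iff₀ htpos (by norm_num : (0:ℝ) < 2)]
      linarith
    have := norm_sub_norm_le f w
    rw [norm_sub_rev] at this
    linarith
  refine ⟨w, ?_, ?_⟩
  · rw [Metric.mem_ball, dist_eq_norm]; exact hwfε
  -- bound ‖A w‖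
  have hAw : A w = t⁻¹ • (A u - A v) := by rw [hw, map_smul, map_sub]
  have hunorm : ‖u‖ ≤ ‖x₀‖ + t * ‖f‖ + δ := by
    have := norm_le_insert' u (x₀ + t • f)
    have h3 : ‖x₀ + t • f‖ ≤ ‖x₀‖ + t * ‖f‖ := by
      calc ‖x₀ + t • f‖ ≤ ‖x₀‖ + ‖t • f‖ := norm_add_le _ _
        _ = ‖x₀‖ + t * ‖f‖ := by
            rw [norm_smul, Real.norm_eq_abs, abs_of_pos htpos]
    calc ‖u‖ ≤ ‖x₀ + t • f‖ + ‖u - (x₀ + t • f)‖ := by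
          have := norm_sub_norm_le u (x₀ + t • f); linarith [norm_sub_le u (x₀ + t • f)]
      _ ≤ ‖x₀‖ + t * ‖f‖ + δ := by linarith
  have hvnorm : ‖v‖ ≤ ‖x₀‖ + δ := by
    calc ‖v‖ ≤ ‖x₀‖ + ‖v - x₀‖ := by
          have := norm_sub_norm_le v x₀; linarith
      _ ≤ ‖x₀‖ + δ := by linarith
  have hsum : ‖u‖ + ‖v‖ ≤ 2 * ‖x₀‖ + r := by
    have hδr : δ ≤ r / 8 := by linarith [htf, hδ2]
    linarith [htf]
  have hAu : ‖A u‖ ≤ n * ‖u‖ := hu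
  have hAv : ‖A v‖ ≤ n * ‖v‖ := hv
  have hAuv : ‖A u - A v‖ ≤ (n : ℝ) * (2 * ‖x₀‖ + r) := by
    calc ‖A u - A v‖ ≤ ‖A u‖ + ‖A v‖ := norm_sub_le _ _
      _ ≤ n * (‖u‖ + ‖v‖) := by push_cast; nlinarith
      _ ≤ (n : ℝ) * (2 * ‖x₀‖ + r) := by
          apply mul_le_mul_of_nonneg_left hsum (Nat.cast_nonneg n)
  have hAwnorm : ‖A w‖ ≤ t⁻¹ * ((n : ℝ) * (2 * ‖x₀‖ + r)) := by
    rw [hAw, norm_smul, Real.norm_eq_abs, abs_of_pos (by positivity : (0:ℝ) < t⁻¹)]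
    exact mul_le_mul_of_nonneg_left hAuv (by positivity)
  have htinv : t⁻¹ = 2 * ‖f‖ / r := by
    rw [ht]; field_simp
  have hkey : t⁻¹ * ((n : ℝ) * (2 * ‖x₀‖ + r)) ≤ N * ‖w‖ := by
    clear_value N t δ w
    rw [htinv, hN]
    rw [div_mul_eq_mul_div, div_mul_eq_mul_div, div_le_div_iff₀ hr hr]
    have hC : (0:ℝ) ≤ 2 * ‖x₀‖ + r := by linarith
    have hfw : ‖f‖ ≤ 2 * ‖w‖ := by linarith
    have hnn : (0:ℝ) ≤ (n:ℝ) := Nat.cast_nonneg n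
    have h : 2 * ‖f‖ * ((n:ℝ) * (2 * ‖x₀‖ + r)) ≤
        4 * ((n:ℝ) + 1) * (2 * ‖x₀‖ + r) * ‖w‖ := by
      calc 2 * ‖f‖ * ((n:ℝ) * (2 * ‖x₀‖ + r))
          = 2 * (n:ℝ) * (2 * ‖x₀‖ + r) * ‖f‖ := by ring
        _ ≤ 2 * (n:ℝ) * (2 * ‖x₀‖ + r) * (2 * ‖w‖) :=
            mul_le_mul_of_nonneg_left hfw
              (mul_nonneg (mul_nonneg (by norm_num) hnn) hC)
        _ = 4 * (n:ℝ) * (2 * ‖x₀‖ + r) * ‖w‖ := by ring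
        _ ≤ 4 * ((n:ℝ) + 1) * (2 * ‖x₀‖ + r) * ‖w‖ := by
            apply mul_le_mul_of_nonneg_right _ (norm_nonneg w)
            apply mul_le_mul_of_nonneg_right _ hC
            linarith
    exact mul_le_mul_of_nonneg_right h (le_of_lt hr)
  exact le_trans hAwnorm hkey
end

section
/- Let H be an RKHS with bounded kernel (sup k(z,z) ≤ κ) on a finite set Z, let μ = E_P[φ(Z)] for a probability measure P, let β₁,…,β_n ∈ ℝ and μ̂ = ∑ β_i φ(z_i) with z_i ∈ Z. Suppose g ∈ H is the indicator of the set {z_i : β_i < 0} among sample points (g(z_i) = 1 if β_i < 0, else 0, and g ≥ 0 on Z) with ‖g‖ ≤ b. If ‖μ̂ − μ‖ ≤ ε, then ∑_i β_i⁻ ≤ ε b, where β_i⁻ = max(0,−β_i). -/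
open MeasureTheory

theorem stmt13 {Z H : Type*} [MeasurableSpace Z] [NormedAddCommGroup H]
    [InnerProductSpace ℝ H] [CompleteSpace H]
    (P : Measure Z) [IsProbabilityMeasure P]
    (φ : Z → H) (hφ : Integrable φ P)
    (g : H) (G : Z → ℝ) (hrepr : ∀ z, (inner ℝ g (φ z) : ℝ) = G z)
    (hGpos : ∀ z, 0 ≤ G z)
    (b : ℝ) (hg : ‖g‖ ≤ b)
    (n : ℕ) (β : Fin n → ℝ) (z : Fin n → Z)
    (hind : ∀ i, G (z i) = if β i < 0 then 1 else 0)
    (ε : ℝ) (hclose : ‖(∑ i, β i • φ (z i)) - ∫ w, φ w ∂P‖ ≤ ε) :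
    ∑ i, max 0 (-β i) ≤ ε * b := by
  set μh : H := ∑ i, β i • φ (z i)
  set μ : H := ∫ w, φ w ∂P
  have h1 : (inner ℝ g μh : ℝ) = -∑ i, max 0 (-β i) := by
    simp only [μh, inner_sum, real_inner_smul_right, hrepr, hind]
    rw [← Finset.sum_neg_distrib]
    refine Finset.sum_congr rfl fun i _ => ?_
    by_cases h : β i < 0
    · simp [h, max_eq_right (by linarith : (0:ℝ) ≤ -β i)]
    · simp [h, max_eq_left (by linarith [not_lt.mp h] : -β i ≤ 0)]
  have h2 : (0:ℝ) ≤ inner ℝ g μ := by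
    rw [show (inner ℝ g μ : ℝ) = ∫ w, (inner ℝ g (φ w) : ℝ) ∂P from
      (integral_inner hφ g).symm]
    exact integral_nonneg fun w => (hrepr w) ▸ hGpos w
  have h3 : |(inner ℝ g (μh - μ) : ℝ)| ≤ ε * b := by
    calc |(inner ℝ g (μh - μ) : ℝ)| ≤ ‖g‖ * ‖μh - μ‖ := abs_real_inner_le_norm g _
      _ ≤ b * ε := by
          have hb : 0 ≤ b := le_trans (norm_nonneg g) hg
          exact mul_le_mul hg hclose (norm_nonneg _) hb
      _ = ε * b := mul_comm b ε
  have h4 : (inner ℝ g (μh - μ) : ℝ) = inner ℝ g μh - inner ℝ g μ := inner_sub_right g μh μ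
  have := neg_le_of_abs_le h3
  linarith [h1 ▸ (h4 ▸ this)]
end
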